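/- Let P be a subset of the plane ℝ², let R ⊆ P be a nonempty set, and define the strong visibility region SV(R) = { q ∈ P : for every r ∈ R, the segment [r, q] is contained in P }. Suppose there are convex sets C₁, …, C_k ⊆ ℝ², each contained in P, with P \ SV(R) ⊆ C₁ ∪ … ∪ C_k. Then every finite hidden set H in P that contains a point of R satisfies |H| ≤ k + 1. -/

import Mathlib

/-- Two points `p q` see each other in `P` if the closed segment between them
lies in `P`. A hidden set in `P` is a subset of `P` no two distinct points of
which see each other. -/
def IsHiddenSet (P H : Set (ℝ × ℝ)) : Prop :=
  H ⊆ P ∧ ∀ p ∈ H, ∀ q ∈ H, p ≠ q → ¬ segment ℝ p q ⊆ P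

/-- The strong visibility region of `R` in `P`: the points of `P` seen by
every point of `R`. -/
def strongVisibilityRegion (P R : Set (ℝ × ℝ)) : Set (ℝ × ℝ) :=
  {q ∈ P | ∀ r ∈ R, segment ℝ r q ⊆ P}

/-- If `P \ SV(R)` is covered by `k` convex pieces contained in `P`, then any
finite hidden set in `P` containing a point of `R` has at most `k + 1` points. -/
theorem hiddenSet_card_le_of_strongVisibility_cover
    (P R : Set (ℝ × ℝ)) (hR : R.Nonempty) (hRP : R ⊆ P)
    (k : ℕ) (C : Fin k → Set (ℝ × ℝ))
    (hconv : ∀ i, Convex ℝ (C i)) (hsub : ∀ i, C i ⊆ P)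
    (hcover : P \ strongVisibilityRegion P R ⊆ ⋃ i, C i)
    (H : Set (ℝ × ℝ)) (hH : IsHiddenSet P H) (hfin : H.Finite)
    (hmeet : (H ∩ R).Nonempty) :
    H.ncard ≤ k + 1 := by
  obtain ⟨r, hrH, hrR⟩ := hmeet
  obtain ⟨hHP, hhid⟩ := hH
  -- every point of H \ {r} is in some C i
  have key : ∀ h ∈ H \ {r}, ∃ i, h ∈ C i := by
    intro h hh
    obtain ⟨hhH, hne⟩ := hh
    have hne' : h ≠ r := hne
    have hnotsee : ¬ segment ℝ h r ⊆ P := hhid h hhH r hrH hne'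
    have : h ∉ strongVisibilityRegion P R := by
      intro hsv
      exact hnotsee (by rw [segment_symm]; exact hsv.2 r hrR)
    have : h ∈ ⋃ i, C i := hcover ⟨hHP hhH, this⟩
    simpa using this
  classical
  have hfin' : (H \ {r}).Finite := hfin.diff
  -- define f : choose index, as ℕ
  set f : ℝ × ℝ → ℕ := fun h => if hh : ∃ i, h ∈ C i then (hh.choose : Fin k).val else 0
  have hmaps : ∀ h ∈ H \ {r}, f h ∈ Set.Iio k := by
    intro h hh
    have hex := key h hh
    simp only [f, dif_pos hex]
    exact (hex.choose).isLt
  have hinj : Set.InjOn f (H \ {r}) := by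
    intro a ha b hb hab
    by_contra hne
    have hexa := key a ha
    have hexb := key b hb
    have hca : a ∈ C hexa.choose := hexa.choose_spec
    have hcb : b ∈ C hexb.choose := hexb.choose_spec
    have : hexa.choose = hexb.choose := by
      have := hab
      simp only [f, dif_pos hexa, dif_pos hexb] at this
      exact Fin.ext this
    rw [this] at hca
    have hseg : segment ℝ a b ⊆ P :=
      fun x hx => hsub _ ((hconv hexb.choose).segment_subset hca hcb hx)
    exact hhid a ha.1 b hb.1 hne hseg
  have h1 : (H \ {r}).ncard ≤ (Set.Iio k).ncard :=
    Set.ncard_le_ncard_of_injOn f hmaps hinj (Set.finite_Iio k)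
  have h2 : (Set.Iio k).ncard = k := by
    rw [← Nat.card_coe_set_eq, Nat.card_eq_fintype_card]
    simp
  have h3 : H.ncard ≤ (H \ {r}).ncard + 1 := by
    have : H ⊆ insert r (H \ {r}) := by
      intro x hx
      by_cases hxr : x = r
      · exact Or.inl hxr
      · exact Or.inr ⟨hx, hxr⟩
    calc H.ncard ≤ (insert r (H \ {r})).ncard :=
          Set.ncard_le_ncard this (hfin'.insert r)
      _ ≤ (H \ {r}).ncard + 1 := Set.ncard_insert_le _ _
  omega
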